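/- arXiv:0709.2056 — 4 statements merged into one kernel-verified Lean document; each statement's English description precedes it below -/
import Mathlib

section
/- Let u : ℝ² → ℝ² be continuous on the closed unit disk D̄. Then the following are equivalent: (i) there is a function s : (0,1] → ℝ with u(x) = s(‖x‖)·x^⊥ for all x ∈ D̄ \ {0} and u(0) = 0; (ii) for every unit vector ω ∈ S¹ and every x ∈ D̄ one has u(Φ_ω x) = −Φ_ω u(x), where Φ_ω denotes the orthogonal reflection of ℝ² across the line spanned by ω (so Φ_ω(aω + bJω) = aω − bJω, with J rotation by 90°). -/
open Metric Set MeasureTheory Filter Real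
open scoped RealInnerProductSpace MeasureTheory

noncomputable section

/-- The plane `ℝ²`, as a Euclidean space. -/
abbrev E2 := EuclideanSpace ℝ (Fin 2)

/-- Counterclockwise rotation of `x` by `90°`:  `x^⊥ = (-x₂, x₁)`. -/
def perp (x : E2) : E2 := WithLp.toLp 2 ![-(x 1), x 0]

/-- The orthogonal reflection of the plane across the line spanned by the unit vector `ω`:
it fixes `ℝω` and negates `(ℝω)^⊥`, i.e. `Φ_ω x = 2⟪x,ω⟫ ω - x`. -/
def reflect (ω x : E2) : E2 := (2 * ⟪x, ω⟫) • ω - x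

lemma inner2 (x y : E2) : ⟪x, y⟫ = x 0 * y 0 + x 1 * y 1 := by
  simp [PiLp.inner_apply, Fin.sum_univ_two, RCLike.inner_apply]; ring

lemma normsq2 (x : E2) : ‖x‖ ^ 2 = x 0 ^ 2 + x 1 ^ 2 := by
  rw [← real_inner_self_eq_norm_sq, inner2]; ring

lemma reflect_apply (ω x : E2) (i : Fin 2) :
    reflect ω x i = 2 * (x 0 * ω 0 + x 1 * ω 1) * ω i - x i := by
  simp [reflect, inner2, PiLp.sub_apply, PiLp.smul_apply, smul_eq_mul]

lemma perp0 (x : E2) : perp x 0 = -(x 1) := rfl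
lemma perp1 (x : E2) : perp x 1 = x 0 := rfl

lemma ext2 (x y : E2) (h0 : x 0 = y 0) (h1 : x 1 = y 1) : x = y := by
  ext i; fin_cases i <;> assumption

lemma unit_sq (ω : E2) (h : ‖ω‖ = 1) : ω 0 ^ 2 + ω 1 ^ 2 = 1 := by
  rw [← normsq2, h]; norm_num

lemma norm_reflect (ω x : E2) (hω : ‖ω‖ = 1) : ‖reflect ω x‖ = ‖x‖ := by
  have hω2 := unit_sq ω hω
  have h : ‖reflect ω x‖ ^ 2 = ‖x‖ ^ 2 := by
    rw [normsq2, normsq2, reflect_apply, reflect_apply]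
    linear_combination (4 * (x 0 * ω 0 + x 1 * ω 1) ^ 2) * hω2
  rw [← Real.sqrt_sq (norm_nonneg (reflect ω x)), h, Real.sqrt_sq (norm_nonneg x)]

lemma norm_perp (x : E2) : ‖perp x‖ = ‖x‖ := by
  have h : ‖perp x‖ ^ 2 = ‖x‖ ^ 2 := by
    rw [normsq2, normsq2, perp0, perp1]; ring
  rw [← Real.sqrt_sq (norm_nonneg (perp x)), h, Real.sqrt_sq (norm_nonneg x)]

lemma key_perp (ω x : E2) (hω : ω 0 ^ 2 + ω 1 ^ 2 = 1) :
    reflect ω (perp x) = - perp (reflect ω x) := by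
  apply ext2 <;>
    simp only [PiLp.neg_apply, reflect_apply, perp0, perp1]
  · linear_combination (-2 * x 1) * hω
  · linear_combination (2 * x 0) * hω

lemma reflect_smul (ω : E2) (r : ℝ) (x : E2) : reflect ω (r • x) = r • reflect ω x := by
  apply ext2 <;>
    simp only [reflect_apply, PiLp.smul_apply, smul_eq_mul] <;> ring

lemma reflect_zero (ω : E2) : reflect ω 0 = 0 := by
  apply ext2 <;> simp [reflect_apply]

lemma refl_map (x y : E2) (hx : x ≠ 0) (hnorm : ‖x‖ = ‖y‖) :
    ∃ ω : E2, ‖ω‖ = 1 ∧ reflect ω x = y := by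
  by_cases hxy : x + y = 0
  · refine ⟨‖x‖⁻¹ • perp x, ?_, ?_⟩
    · rw [norm_smul, norm_perp, Real.norm_eq_abs, abs_inv, abs_norm,
        inv_mul_cancel₀ (norm_ne_zero_iff.mpr hx)]
    · have hy : y = -x := eq_neg_of_add_eq_zero_right hxy
      have hinz : ⟪x, perp x⟫ = 0 := by rw [inner2, perp0, perp1]; ring
      rw [reflect, real_inner_smul_right, hinz, hy]
      simp
  · set n := ‖x + y‖ with hn
    have hnz : n ≠ 0 := norm_ne_zero_iff.mpr hxy
    refine ⟨n⁻¹ • (x + y), ?_, ?_⟩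
    · rw [norm_smul, Real.norm_eq_abs, abs_inv, abs_norm, inv_mul_cancel₀ hnz]
    · have hx2 : x 0 ^ 2 + x 1 ^ 2 = y 0 ^ 2 + y 1 ^ 2 := by
        rw [← normsq2, ← normsq2, hnorm]
      have h2 : 2 * ⟪x, x + y⟫ = n ^ 2 := by
        rw [inner2, hn, normsq2]
        simp only [PiLp.add_apply]
        linear_combination hx2
      have hcoef : 2 * (n⁻¹ * ⟪x, x + y⟫) * n⁻¹ = 1 := by
        have e : 2 * (n⁻¹ * ⟪x, x + y⟫) * n⁻¹ = (2 * ⟪x, x + y⟫) / n ^ 2 := by ring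
        rw [e, h2, div_self (pow_ne_zero 2 hnz)]
      rw [reflect, real_inner_smul_right, smul_smul, hcoef, one_smul, add_sub_cancel_left]

/-- For `u` continuous on the closed unit disk, `u` has the form `u x = s(‖x‖) • x^⊥`
(with `u 0 = 0`) if and only if `u (Φ_ω x) = - Φ_ω (u x)` for every unit vector `ω`
and every `x` in the closed disk. -/
theorem stmt2 (u : E2 → E2)
    (hcont : ContinuousOn u (closedBall 0 1)) :
    ((∃ s : ℝ → ℝ, ∀ x ∈ closedBall (0:E2) 1 \ {0}, u x = s ‖x‖ • perp x) ∧ u 0 = 0)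
      ↔ (∀ ω : E2, ‖ω‖ = 1 → ∀ x ∈ closedBall (0:E2) 1,
          u (reflect ω x) = - reflect ω (u x)) := by
  constructor
  · rintro ⟨⟨s, hs⟩, h0⟩ ω hω x hx
    by_cases hx0 : x = 0
    · subst hx0
      rw [reflect_zero, h0, reflect_zero, neg_zero]
    · have hω2 := unit_sq ω hω
      have hrx : reflect ω x ∈ closedBall (0:E2) 1 \ {0} := by
        constructor
        · rw [mem_closedBall_zero_iff, norm_reflect ω x hω]
          exact mem_closedBall_zero_iff.mp hx
        · simp only [mem_singleton_iff]
          intro h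
          apply hx0
          have := norm_reflect ω x hω
          rw [h, norm_zero] at this
          exact norm_eq_zero.mp this.symm
      rw [hs _ hrx, norm_reflect ω x hω, hs x ⟨hx, hx0⟩, reflect_smul,
        key_perp ω x hω2, smul_neg, neg_neg]
  · intro H
    -- u 0 = 0
    have h0 : u 0 = 0 := by
      have hn0 : ‖(EuclideanSpace.single 0 1 : E2)‖ = 1 := by
        simp [EuclideanSpace.norm_single]
      have hn1 : ‖(EuclideanSpace.single 1 1 : E2)‖ = 1 := by
        simp [EuclideanSpace.norm_single]
      have h₁ := H _ hn0 0 (mem_closedBall_self zero_le_one)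
      have h₂ := H _ hn1 0 (mem_closedBall_self zero_le_one)
      rw [reflect_zero] at h₁ h₂
      apply ext2
      · have : u 0 0 = (-(reflect (EuclideanSpace.single 0 1) (u 0))) 0 := by
          conv_lhs => rw [h₁]
        simp only [PiLp.neg_apply, reflect_apply, EuclideanSpace.single_apply] at this
        norm_num at this
        simpa using by linarith [this]
      · have : u 0 1 = (-(reflect (EuclideanSpace.single 1 1) (u 0))) 1 := by
          conv_lhs => rw [h₂]
        simp only [PiLp.neg_apply, reflect_apply, EuclideanSpace.single_apply] at this
        norm_num at this
        simpa using by linarith [this]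
    set c : E2 → ℝ := fun x => (u x 1 * x 0 - u x 0 * x 1) / (x 0 ^ 2 + x 1 ^ 2)
      with hc
    -- pointwise form
    have key : ∀ x ∈ closedBall (0:E2) 1, x ≠ 0 → u x = c x • perp x := by
      intro x hx hx0
      have hnx : ‖x‖ ≠ 0 := norm_ne_zero_iff.mpr hx0
      set ω : E2 := ‖x‖⁻¹ • x with hωdef
      have hωn : ‖ω‖ = 1 := by
        rw [hωdef, norm_smul, Real.norm_eq_abs, abs_inv, abs_norm, inv_mul_cancel₀ hnx]
      have hfix : reflect ω x = x := by
        rw [reflect, real_inner_smul_right, real_inner_self_eq_norm_sq, smul_smul]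
        have h22 : 2 * (‖x‖⁻¹ * ‖x‖ ^ 2) * ‖x‖⁻¹ = 2 := by field_simp
        rw [h22, two_smul]
        module
      have horth := H ω hωn x hx
      rw [hfix] at horth
      have hA : (2 * ⟪u x, ω⟫) • ω = 0 := by
        rw [reflect, neg_sub] at horth
        exact sub_eq_self.mp horth.symm
      have hωne : ω ≠ 0 := by
        intro h; rw [h, norm_zero] at hωn; norm_num at hωn
      have hinz : ⟪u x, ω⟫ = 0 := by
        rcases smul_eq_zero.mp hA with h | h
        · linarith
        · exact absurd h hωne
      have hP : u x 0 * x 0 + u x 1 * x 1 = 0 := by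
        rw [hωdef, real_inner_smul_right, inner2] at hinz
        rcases mul_eq_zero.mp hinz with h | h
        · exact absurd h (inv_ne_zero hnx)
        · exact h
      have hsq : x 0 ^ 2 + x 1 ^ 2 ≠ 0 := by
        rw [← normsq2]; positivity
      apply ext2
      · simp only [hc, PiLp.smul_apply, perp0, smul_eq_mul]
        field_simp
        linear_combination (x 0) * hP
      · simp only [hc, PiLp.smul_apply, perp1, smul_eq_mul]
        field_simp
        linear_combination (x 1) * hP
    refine ⟨⟨fun r => c (r • EuclideanSpace.single 0 1), ?_⟩, h0⟩
    rintro x ⟨hx, hx0⟩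
    simp only [mem_singleton_iff] at hx0
    have hr : 0 < ‖x‖ := norm_pos_iff.mpr hx0
    set y : E2 := ‖x‖ • EuclideanSpace.single 0 1 with hy
    have hyn : ‖y‖ = ‖x‖ := by
      rw [hy, norm_smul, Real.norm_eq_abs, abs_norm]
      simp [EuclideanSpace.norm_single]
    have hy0 : y ≠ 0 := by
      intro h; rw [h, norm_zero] at hyn; exact hr.ne' hyn.symm
    have hycb : y ∈ closedBall (0:E2) 1 := by
      rw [mem_closedBall_zero_iff, hyn]
      exact mem_closedBall_zero_iff.mp hx
    obtain ⟨ω, hω1, hωxy⟩ := refl_map y x hy0 (by rw [hyn])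
    have huy := key y hycb hy0
    have hstep := H ω hω1 y hycb
    rw [hωxy, huy, reflect_smul, key_perp ω y (unit_sq ω hω1), hωxy, smul_neg,
      neg_neg] at hstep
    exact hstep
end
end

section
/- Let s : (0,1] → ℝ be continuously differentiable and define u(x) = s(‖x‖)·x^⊥ for 0 < ‖x‖ ≤ 1, and p₀(x) = −∫_{‖x‖}^{1} ρ·s(ρ)² dρ. Then for every x with 0 < ‖x‖ < 1: (a) the derivative of u at x applied to the vector u(x) equals −s(‖x‖)²·x (i.e. ∇_{u}u(x) = −s(‖x‖)²·x), and (b) p₀ is differentiable at x with gradient ∇p₀(x) = s(‖x‖)²·x; hence ∇_{u}u + ∇p₀ = 0, so u is a steady solution of the Euler equations with pressure p₀. -/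
open Metric Set MeasureTheory Filter Real Topology
open scoped RealInnerProductSpace MeasureTheory

noncomputable section

/-- `perp` as a continuous linear map. -/
def perpL : E2 →L[ℝ] E2 :=
  LinearMap.toContinuousLinearMap
    { toFun := perp
      map_add' := by
        intro a b
        ext i
        fin_cases i <;> simp [perp] <;> ring
      map_smul' := by
        intro c a
        ext i
        fin_cases i <;> simp [perp] }

lemma perpL_apply (x : E2) : perpL x = perp x := rfl

lemma perp_smul (c : ℝ) (y : E2) : perp (c • y) = c • perp y := by
  ext i
  fin_cases i <;> simp [perp]

lemma perp_perp (x : E2) : perp (perp x) = -x := by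
  ext i
  fin_cases i <;> simp [perp] <;> ring

lemma inner_perp (x : E2) : ⟪x, perp x⟫ = 0 := by
  simp [PiLp.inner_apply, Fin.sum_univ_two, perp]
  ring

lemma hasFDerivAt_norm_of_ne {x : E2} (hx : x ≠ 0) :
    HasFDerivAt (fun y : E2 => ‖y‖) (‖x‖⁻¹ • innerSL ℝ x) x := by
  have hx0 : (0:ℝ) < ‖x‖ := norm_pos_iff.mpr hx
  have h1 : HasFDerivAt (fun y : E2 => ‖y‖ ^ 2) (2 • innerSL ℝ x) x :=
    (hasStrictFDerivAt_norm_sq x).hasFDerivAt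
  have h2 : HasDerivAt Real.sqrt (1 / (2 * Real.sqrt (‖x‖ ^ 2))) (‖x‖ ^ 2) :=
    Real.hasDerivAt_sqrt (by positivity)
  have h3 := h2.comp_hasFDerivAt x h1
  have heq : (Real.sqrt ∘ fun y : E2 => ‖y‖ ^ 2) = fun y : E2 => ‖y‖ := by
    funext y; simp [Real.sqrt_sq (norm_nonneg y)]
  rw [heq] at h3
  refine h3.congr_fderiv ?_
  ext y
  rw [Real.sqrt_sq (norm_nonneg x)]
  simp only [ContinuousLinearMap.coe_smul', Pi.smul_apply, smul_eq_mul,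
    ContinuousLinearMap.smul_apply, nsmul_eq_mul, Nat.cast_ofNat]
  field_simp

/-- If `s` is continuously differentiable on `(0,1]`, `u x = s(‖x‖) • x^⊥`, and
`p₀ x = - ∫_{‖x‖}^1 ρ s(ρ)² dρ`, then for `0 < ‖x‖ < 1` one has
`∇_u u (x) = Du(x)(u x) = - s(‖x‖)² • x`, `p₀` has gradient `s(‖x‖)² • x` at `x`,
and hence `∇_u u + ∇ p₀ = 0`: `u` is a steady Euler solution with pressure `p₀`. -/
theorem stmt3 (s s' : ℝ → ℝ)
    (hs : ∀ r ∈ Ioc (0:ℝ) 1, HasDerivWithinAt s (s' r) (Ioc 0 1) r)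
    (hs'c : ContinuousOn s' (Ioc 0 1))
    (u : E2 → E2) (hu : ∀ x : E2, u x = s ‖x‖ • perp x)
    (p₀ : E2 → ℝ) (hp : ∀ x : E2, p₀ x = -∫ ρ in (‖x‖)..1, ρ * (s ρ)^2) :
    ∀ x : E2, 0 < ‖x‖ → ‖x‖ < 1 →
      fderiv ℝ u x (u x) = -((s ‖x‖)^2 • x)
      ∧ HasGradientAt p₀ ((s ‖x‖)^2 • x) x
      ∧ fderiv ℝ u x (u x) + (s ‖x‖)^2 • x = 0 := by
  intro x hx0 hx1
  set r := ‖x‖ with hr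
  have hxne : x ≠ 0 := fun h => by simp [h, hr] at hx0
  have hmemIoc : Ioc (0:ℝ) 1 ∈ 𝓝 r := Ioc_mem_nhds hx0 hx1
  have hsr : HasDerivAt s (s' r) r :=
    (hs r ⟨hx0, hx1.le⟩).hasDerivAt hmemIoc
  have hN : HasFDerivAt (fun y : E2 => ‖y‖) (r⁻¹ • innerSL ℝ x) x :=
    hasFDerivAt_norm_of_ne hxne
  -- derivative of y ↦ s ‖y‖
  have hsc : HasFDerivAt (fun y : E2 => s ‖y‖) (s' r • (r⁻¹ • innerSL ℝ x)) x :=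
    hsr.comp_hasFDerivAt x hN
  -- derivative of u
  have huD : HasFDerivAt u
      (s r • perpL + (s' r • (r⁻¹ • innerSL ℝ x)).smulRight (perpL x)) x := by
    have hfun : u = fun y => s ‖y‖ • perpL y := funext fun y => hu y
    rw [hfun]
    exact hsc.smul (perpL.hasFDerivAt)
  -- evaluate the derivative at u x
  have key : fderiv ℝ u x (u x) = -((s r)^2 • x) := by
    rw [huD.fderiv]
    rw [hu x]
    simp only [ContinuousLinearMap.add_apply, ContinuousLinearMap.smul_apply,
      ContinuousLinearMap.smulRight_apply, ContinuousLinearMap.coe_smul', Pi.smul_apply,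
      innerSL_apply_apply, perpL_apply, smul_eq_mul, inner_smul_right, inner_perp]
    rw [perp_smul, perp_perp]
    simp only [mul_zero, zero_smul, add_zero, smul_neg, smul_smul, ← hr]
    rw [show s r * s r = (s r)^2 by ring]
  refine ⟨key, ?_, by rw [key]; simp⟩
  -- gradient of p₀
  have hscont : ContinuousOn s (Ioc 0 1) := fun t ht =>
    (hs t ht).continuousWithinAt
  have hfc : ContinuousOn (fun ρ : ℝ => ρ * (s ρ)^2) (Ioc 0 1) :=
    continuousOn_id.mul ((hscont.pow 2))
  have hsubset : uIcc r 1 ⊆ Ioc 0 1 := by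
    rw [uIcc_of_le hx1.le]
    exact Icc_subset_Ioc_iff hx1.le |>.mpr ⟨hx0, le_refl 1⟩
  have hint : IntervalIntegrable (fun ρ : ℝ => ρ * (s ρ)^2) volume r 1 :=
    (hfc.mono hsubset).intervalIntegrable
  have hmeas : StronglyMeasurableAtFilter (fun ρ : ℝ => ρ * (s ρ)^2) (𝓝 r) volume :=
    ⟨Ioc 0 1, hmemIoc, hfc.aestronglyMeasurable measurableSet_Ioc⟩
  have hcr : ContinuousAt (fun ρ : ℝ => ρ * (s ρ)^2) r :=
    hfc.continuousAt hmemIoc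
  have hg0 : HasDerivAt (fun t : ℝ => ∫ ρ in t..1, ρ * (s ρ)^2)
      (-(r * (s r)^2)) r :=
    intervalIntegral.integral_hasDerivAt_left hint hmeas hcr
  have hg : HasDerivAt (fun t : ℝ => -∫ ρ in t..1, ρ * (s ρ)^2) (r * (s r)^2) r := by
    have := hg0.neg; rw [neg_neg] at this; exact this
  have hpD : HasFDerivAt p₀ ((r * (s r)^2) • (r⁻¹ • innerSL ℝ x)) x := by
    have hfun : p₀ = (fun t : ℝ => -∫ ρ in t..1, ρ * (s ρ)^2) ∘ (fun y : E2 => ‖y‖) :=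
      funext fun y => hp y
    rw [hfun]
    exact hg.comp_hasFDerivAt x hN
  rw [hasGradientAt_iff_hasFDerivAt]
  refine hpD.congr_fderiv ?_
  ext y
  simp only [InnerProductSpace.toDual_apply_apply, ContinuousLinearMap.smul_apply,
    ContinuousLinearMap.coe_smul', Pi.smul_apply, innerSL_apply_apply, smul_eq_mul,
    real_inner_smul_left]
  field_simp
end
end

section
/- Let H(t,x,y) := (4πt)^{-1}·exp(−‖x−y‖²/(4t)) and let N(t,x,y) := y·∇_y H(t,x,y) for t > 0. There is a constant C > 0 such that for every t > 0 and every x ∈ S¹, ∫_{S¹} |N(t,x,y)| dσ(y) ≤ C·t^{-1/2}, where σ is arclength measure on the unit circle S¹. -/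
open Metric Set MeasureTheory Filter Real
open scoped RealInnerProductSpace MeasureTheory

noncomputable section

/-- The two-dimensional heat kernel `H(t,x,y) = (4πt)⁻¹ exp(-‖x-y‖²/(4t))`. -/
def heatK (t : ℝ) (x y : E2) : ℝ := (4 * π * t)⁻¹ * Real.exp (-‖x - y‖^2 / (4 * t))

/-- The kernel `N(t,x,y) = y ⬝ ∇_y H(t,x,y)`, the outward normal derivative in `y` of
the heat kernel on the unit circle. -/
def Nker (t : ℝ) (x y : E2) : ℝ := ⟪y, gradient (fun z => heatK t x z) y⟫

def cmap (θ : ℝ) : E2 := WithLp.toLp 2 ![Real.cos θ, Real.sin θ]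

lemma cmap_continuous : Continuous cmap := by
  show Continuous ((EuclideanSpace.equiv (Fin 2) ℝ).symm ∘ fun θ => ![Real.cos θ, Real.sin θ])
  refine ((EuclideanSpace.equiv (Fin 2) ℝ).symm.continuous).comp ?_
  refine continuous_pi fun i => ?_
  fin_cases i <;> simp <;> fun_prop

lemma cmap_inner (a b : ℝ) : ⟪cmap a, cmap b⟫ = Real.cos (a - b) := by
  simp [cmap, PiLp.inner_apply, Fin.sum_univ_two, RCLike.inner_apply, Real.cos_sub]
  ring

lemma cmap_norm (a : ℝ) : ‖cmap a‖ = 1 := by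
  have h := cmap_inner a a
  simp only [sub_self, Real.cos_zero] at h
  rw [real_inner_self_eq_norm_sq] at h
  nlinarith [norm_nonneg (cmap a)]

lemma cmap_dist_sq (a b : ℝ) : ‖cmap a - cmap b‖^2 = 2 - 2 * Real.cos (a - b) := by
  rw [norm_sub_sq_real, cmap_inner, cmap_norm, cmap_norm]; ring

lemma one_sub_cos (s : ℝ) : 1 - Real.cos s = 2 * Real.sin (s/2)^2 := by
  have h1 := Real.cos_two_mul (s/2)
  have h2 := Real.sin_sq_add_cos_sq (s/2)
  have h3 : 2 * (s/2) = s := by ring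
  rw [h3] at h1
  nlinarith

lemma cmap_lipschitz : LipschitzWith 1 cmap := by
  refine LipschitzWith.of_dist_le_mul fun a b => ?_
  rw [NNReal.coe_one, one_mul, dist_eq_norm, Real.dist_eq]
  have h1 : ‖cmap a - cmap b‖^2 ≤ |a - b|^2 := by
    rw [cmap_dist_sq]
    have h2 := one_sub_cos (a - b)
    have h3 := Real.sin_sq_le_sq (x := (a - b)/2)
    nlinarith [sq_abs (a - b)]
  nlinarith [norm_nonneg (cmap a - cmap b), abs_nonneg (a - b)]

lemma cmap_surj (x : E2) (hx : ‖x‖ = 1) : ∃ φ : ℝ, cmap φ = x := by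
  have hsum : (x 0)^2 + (x 1)^2 = 1 := by
    have h := hx
    rw [EuclideanSpace.norm_eq] at h
    simp [Fin.sum_univ_two, Real.norm_eq_abs, sq_abs] at h
    nlinarith [Real.sq_sqrt (by positivity : (0:ℝ) ≤ (x 0)^2 + (x 1)^2),
      Real.sqrt_nonneg ((x 0)^2 + (x 1)^2)]
  set z : ℂ := ⟨x 0, x 1⟩ with hz
  have habs : ‖z‖ = 1 := by
    rw [Complex.norm_def, Complex.normSq_mk]
    rw [show x 0 * x 0 + x 1 * x 1 = 1 by nlinarith]
    exact Real.sqrt_one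
  have hz0 : z ≠ 0 := by
    intro h; rw [h] at habs; simp at habs
  refine ⟨Complex.arg z, ?_⟩
  have hc : Real.cos (Complex.arg z) = x 0 := by
    rw [Complex.cos_arg hz0, habs]; simp [hz]
  have hs : Real.sin (Complex.arg z) = x 1 := by
    rw [Complex.sin_arg, habs]; simp [hz]
  ext i
  fin_cases i <;> simp [cmap, hc, hs]

lemma cmap_period (θ : ℝ) (n : ℤ) : cmap (θ + n * (2*π)) = cmap θ := by
  ext i
  fin_cases i <;>
    simp [cmap, Real.cos_add_int_mul_two_pi, Real.sin_add_int_mul_two_pi]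

lemma measure_le : (μH[1] : Measure E2).restrict (sphere 0 1) ≤
    ((volume : Measure ℝ).restrict (Ico 0 (2*π))).map cmap := by
  rw [Measure.le_iff]
  intro A hA
  rw [Measure.map_apply cmap_continuous.measurable hA,
      Measure.restrict_apply hA,
      Measure.restrict_apply (hA.preimage cmap_continuous.measurable)]
  have h2π : (0:ℝ) < 2*π := by positivity
  have hsub : A ∩ sphere (0:E2) 1 ⊆ cmap '' (cmap ⁻¹' A ∩ Ico 0 (2*π)) := by
    rintro y ⟨hyA, hy⟩
    rw [mem_sphere_zero_iff_norm] at hy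
    obtain ⟨φ, hφ⟩ := cmap_surj y hy
    have heq : cmap (toIcoMod h2π 0 φ) = y := by
      rw [← self_sub_toIcoDiv_zsmul h2π 0 φ]
      have : φ - toIcoDiv h2π 0 φ • (2*π) = φ + ((-(toIcoDiv h2π 0 φ) : ℤ) : ℝ) * (2*π) := by
        rw [zsmul_eq_mul]; push_cast; ring
      rw [this, cmap_period, hφ]
    refine ⟨toIcoMod h2π 0 φ, ⟨?_, by simpa using toIcoMod_mem_Ico' h2π φ⟩, heq⟩
    simp only [mem_preimage, heq]; exact hyA
  calc μH[1] (A ∩ sphere (0:E2) 1)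
      ≤ μH[1] (cmap '' (cmap ⁻¹' A ∩ Ico 0 (2*π))) := measure_mono hsub
    _ ≤ 1 * μH[1] (cmap ⁻¹' A ∩ Ico 0 (2*π)) := by
        simpa using cmap_lipschitz.hausdorffMeasure_image_le (d := 1) zero_le_one _
    _ = volume (cmap ⁻¹' A ∩ Ico 0 (2*π)) := by
        rw [one_mul, MeasureTheory.hausdorffMeasure_real]

lemma heat_grad (t : ℝ) (x y : E2) :
    HasGradientAt (fun z => heatK t x z) (((2*t)⁻¹ * heatK t x y) • (x - y)) y := by
  rw [hasGradientAt_iff_hasFDerivAt]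
  have h0 : ∀ z : E2, heatK t x z = (4 * π * t)⁻¹ * Real.exp ((-(4*t)⁻¹) * ⟪x - z, x - z⟫) := by
    intro z
    rw [heatK, real_inner_self_eq_norm_sq]
    ring_nf
  simp_rw [h0]
  have h1 : HasFDerivAt (fun z : E2 => x - z) (-(ContinuousLinearMap.id ℝ E2)) y :=
    (hasFDerivAt_id y).const_sub x
  have h2 := (h1.inner ℝ h1)
  have h3 := ((h2.const_mul (-(4*t)⁻¹)).exp).const_mul ((4 * π * t)⁻¹)
  convert h3 using 1
  · rfl
  ext w
  simp [real_inner_smul_left, fderivInnerCLM, real_inner_comm (x - y) w, heatK,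
    real_inner_self_eq_norm_sq]
  ring_nf
  rw [inner_sub_left]; ring

lemma Nker_eq (t : ℝ) (x : E2) :
    Nker t x = fun y => ((2*t)⁻¹ * heatK t x y) * ⟪y, x - y⟫ := by
  funext y
  rw [Nker, (heat_grad t x y).gradient, real_inner_smul_right]

lemma Nker_cont (t : ℝ) (x : E2) : Continuous (Nker t x) := by
  rw [Nker_eq]
  have hc : Continuous (fun y : E2 => heatK t x y) := by
    unfold heatK; fun_prop
  exact (continuous_const.mul hc).mul (continuous_id.inner (continuous_const.sub continuous_id))

lemma Nker_bound {t : ℝ} (ht : 0 < t) {x y : E2} (hx : ‖x‖ = 1) (hy : ‖y‖ = 1) :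
    |Nker t x y| ≤ (4*π*t)⁻¹ * Real.exp (-‖x - y‖^2 / (8*t)) := by
  have ht' : t ≠ 0 := ht.ne'
  have hinner : ⟪y, x - y⟫ = -(‖x - y‖^2/2) := by
    have h1 : ⟪y, x - y⟫ = ⟪y, x⟫ - ⟪y, y⟫ := inner_sub_right y x y
    have h2 : ⟪y, y⟫ = 1 := by rw [real_inner_self_eq_norm_sq, hy]; norm_num
    have h3 : ‖x - y‖^2 = 2 - 2*⟪x, y⟫ := by
      rw [norm_sub_sq_real, hx, hy]; ring
    have h4 : ⟪y, x⟫ = ⟪x, y⟫ := real_inner_comm x y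
    rw [h1, h2, h4]; linarith
  rw [Nker_eq]
  simp only []
  rw [hinner]
  set u : ℝ := ‖x - y‖^2 / (4*t) with hu
  have hunn : 0 ≤ u := by positivity
  have hr : ‖x - y‖^2 = 4*t*u := by rw [hu]; field_simp
  have e1 : -‖x - y‖^2 / (4*t) = -u := by rw [hr]; field_simp
  have e2 : -‖x - y‖^2 / (8*t) = -(u/2) := by rw [hr]; field_simp; ring
  have key : u * Real.exp (-u) ≤ Real.exp (-(u/2)) := by
    have k1 : u ≤ Real.exp (u/2) := by
      have e3 : Real.exp (u/2) = Real.exp (u/4) * Real.exp (u/4) := by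
        rw [← Real.exp_add]; ring_nf
      nlinarith [Real.add_one_le_exp (u/4), Real.exp_pos (u/4), sq_nonneg (u/4 - 1)]
    calc u * Real.exp (-u) ≤ Real.exp (u/2) * Real.exp (-u) :=
          mul_le_mul_of_nonneg_right k1 (Real.exp_pos _).le
      _ = Real.exp (-(u/2)) := by rw [← Real.exp_add]; ring_nf
  have hnonpos : (2*t)⁻¹ * heatK t x y * (-(‖x - y‖^2/2)) ≤ 0 := by
    apply mul_nonpos_of_nonneg_of_nonpos
    · have : 0 < heatK t x y := by unfold heatK; positivity
      positivity
    · have : 0 ≤ ‖x - y‖^2/2 := by positivity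
      linarith
  rw [abs_of_nonpos hnonpos, heatK, e1, e2]
  have hlhs : -((2*t)⁻¹ * ((4*π*t)⁻¹ * Real.exp (-u)) * (-(‖x - y‖^2/2)))
      = (4*π*t)⁻¹ * (u * Real.exp (-u)) := by
    rw [hr]; field_simp; ring
  rw [hlhs]
  exact mul_le_mul_of_nonneg_left key (by positivity)

lemma jordan_aux {s : ℝ} (h0 : 0 ≤ s) (hπ : s ≤ π) : s^2 ≤ π^2 * Real.sin (s/2)^2 := by
  have h6 := Real.mul_le_sin (x := s/2) (by positivity) (by linarith)
  have hπ0 := Real.pi_pos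
  have h5 : s ≤ π * Real.sin (s/2) := by
    have e : 2/π * (s/2) = s/π := by ring
    rw [e, div_le_iff₀ hπ0] at h6
    linarith
  nlinarith [mul_self_le_mul_self h0 h5]

lemma jordan {s : ℝ} (hs : |s| ≤ π) : s^2 ≤ π^2 * Real.sin (s/2)^2 := by
  rcases le_or_gt 0 s with h | h
  · exact jordan_aux h (by rwa [abs_of_nonneg h] at hs)
  · have h1 := jordan_aux (s := -s) (by linarith) (by rwa [abs_of_neg h] at hs)
    have h2 : Real.sin (-s/2) = -Real.sin (s/2) := by
      rw [show -s/2 = -(s/2) by ring, Real.sin_neg]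
    rw [h2] at h1
    nlinarith

lemma oneD {t : ℝ} (ht : 0 < t) (x : E2) (hx : ‖x‖ = 1) :
    ∫ θ in Ico 0 (2*π), (4*π*t)⁻¹ * Real.exp (-‖x - cmap θ‖^2 / (8*t))
      ≤ (Real.sqrt (2*π^3) / (4*π)) * t ^ (-(1:ℝ)/2) := by
  obtain ⟨φ, hφ⟩ := cmap_surj x hx
  have hπ := Real.pi_pos
  have ht' : t ≠ 0 := ht.ne'
  set h : ℝ → ℝ := fun s => (4*π*t)⁻¹ * Real.exp (-(2 - 2*Real.cos s) / (8*t)) with hh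
  have hcont : Continuous h := by fun_prop
  have hval : ∀ θ, (4*π*t)⁻¹ * Real.exp (-‖x - cmap θ‖^2 / (8*t)) = h (θ - φ) := by
    intro θ
    rw [← hφ, cmap_dist_sq, hh]
    simp only []
    rw [show φ - θ = -(θ - φ) by ring, Real.cos_neg]
  have hper : Function.Periodic h (2*π) := by
    intro s; simp only [hh, Real.cos_add_two_pi]
  set G : ℝ → ℝ := fun s => (4*π*t)⁻¹ * Real.exp (-(2*π^2*t)⁻¹ * s^2) with hG
  have hGcont : Continuous G := by fun_prop
  have hGint : Integrable G := by
    exact (integrable_exp_neg_mul_sq (by positivity)).const_mul _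
  calc ∫ θ in Ico 0 (2*π), (4*π*t)⁻¹ * Real.exp (-‖x - cmap θ‖^2 / (8*t))
      = ∫ θ in Ico 0 (2*π), h (θ - φ) := by simp_rw [hval]
    _ = ∫ θ in Ioo 0 (2*π), h (θ - φ) := integral_Ico_eq_integral_Ioo
    _ = ∫ θ in Ioc 0 (2*π), h (θ - φ) := integral_Ioc_eq_integral_Ioo.symm
    _ = ∫ θ in (0:ℝ)..(2*π), h (θ - φ) :=
        (intervalIntegral.integral_of_le (by positivity)).symm
    _ = ∫ s in (0 - φ)..(2*π - φ), h s :=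
        intervalIntegral.integral_comp_sub_right (fun s => h s) φ
    _ = ∫ s in (-φ)..(-φ + 2*π), h s := by rw [zero_sub]; ring_nf
    _ = ∫ s in (-π)..(-π + 2*π), h s := hper.intervalIntegral_add_eq (-φ) (-π)
    _ = ∫ s in (-π)..π, h s := by rw [show -π + 2*π = π by ring]
    _ ≤ ∫ s in (-π)..π, G s := by
        apply intervalIntegral.integral_mono_on (by linarith)
          (hcont.intervalIntegrable _ _) (hGcont.intervalIntegrable _ _)
        intro s hs
        have habs : |s| ≤ π := abs_le.2 ⟨hs.1, hs.2⟩
        have hj := jordan habs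
        have h4 : 2 - 2*Real.cos s = 4*Real.sin (s/2)^2 := by
          have := one_sub_cos s; linarith
        simp only [hh, hG]
        apply mul_le_mul_of_nonneg_left _ (by positivity)
        apply Real.exp_le_exp.2
        rw [h4]
        have e1 : -(2*π^2*t)⁻¹ * s^2 = -(s^2/π^2) / (2*t) := by
          field_simp
        have e2 : -(4*Real.sin (s/2)^2) / (8*t) = -(Real.sin (s/2)^2) / (2*t) := by
          field_simp; ring
        have hdiv : s^2/π^2 ≤ Real.sin (s/2)^2 := by
          rw [div_le_iff₀ (by positivity : (0:ℝ) < π^2)]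
          nlinarith [hj]
        rw [e1, e2, div_le_div_iff₀ (by positivity : (0:ℝ) < 2*t)
          (by positivity : (0:ℝ) < 2*t)]
        nlinarith [mul_le_mul_of_nonneg_right hdiv (by positivity : (0:ℝ) ≤ 2*t)]
    _ = ∫ s in Ioc (-π) π, G s := intervalIntegral.integral_of_le (by linarith)
    _ ≤ ∫ s, G s := by
        apply setIntegral_le_integral hGint
        filter_upwards with s
        positivity
    _ = (4*π*t)⁻¹ * ∫ s, Real.exp (-(2*π^2*t)⁻¹ * s^2) := integral_const_mul _ _
    _ = (4*π*t)⁻¹ * Real.sqrt (π / (2*π^2*t)⁻¹) := by rw [integral_gaussian]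
    _ = (4*π*t)⁻¹ * (Real.sqrt (2*π^3) * Real.sqrt t) := by
        rw [show π / (2*π^2*t)⁻¹ = (2*π^3) * t by field_simp,
          Real.sqrt_mul (by positivity)]
    _ ≤ (Real.sqrt (2*π^3) / (4*π)) * t ^ (-(1:ℝ)/2) := by
        apply le_of_eq
        have hts : t ^ (-(1:ℝ)/2) = (Real.sqrt t)⁻¹ := by
          rw [neg_div, Real.rpow_neg ht.le, ← Real.sqrt_eq_rpow]
        have hst : Real.sqrt t * Real.sqrt t = t := Real.mul_self_sqrt ht.le
        have hstpos : 0 < Real.sqrt t := Real.sqrt_pos.2 ht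
        rw [hts]
        field_simp
        have hm : Real.sqrt 2 * Real.sqrt (π^3) = Real.sqrt (2*π^3) :=
          (Real.sqrt_mul (by norm_num) _).symm
        have hsq : Real.sqrt t^2 = t := Real.sq_sqrt ht.le
        linear_combination hsq


/-- There is `C > 0` such that for all `t > 0` and `x ∈ S¹`,
`∫_{S¹} |N(t,x,y)| dσ(y) ≤ C t^{-1/2}`, where `σ` is arclength (one-dimensional
Hausdorff) measure on the unit circle. -/
theorem stmt11 : ∃ C > (0:ℝ), ∀ t > (0:ℝ), ∀ x : E2, ‖x‖ = 1 →
    (∫ y in sphere (0:E2) 1, |Nker t x y| ∂(μH[1])) ≤ C * t ^ (-(1:ℝ)/2) := by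
  have hπ := Real.pi_pos
  refine ⟨Real.sqrt (2*π^3)/(4*π), by positivity, ?_⟩
  intro t ht x hx
  have ht' : t ≠ 0 := ht.ne'
  set Bf : E2 → ℝ := fun y => (4*π*t)⁻¹ * Real.exp (-‖x - y‖^2 / (8*t)) with hBf
  have hBcont : Continuous Bf := by fun_prop
  have hmeasB : Measurable fun y => ENNReal.ofReal (Bf y) :=
    hBcont.measurable.ennreal_ofReal
  rw [MeasureTheory.integral_eq_lintegral_of_nonneg_ae
      (Filter.Eventually.of_forall fun y => abs_nonneg _)
      ((Nker_cont t x).abs.aestronglyMeasurable)]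
  apply ENNReal.toReal_le_of_le_ofReal (by positivity)
  have hCint : IntegrableOn (fun θ => Bf (cmap θ)) (Ico 0 (2*π)) :=
    ((hBcont.comp cmap_continuous).integrableOn_Icc).mono_set Ico_subset_Icc_self
  calc ∫⁻ y, ENNReal.ofReal |Nker t x y| ∂((μH[1]).restrict (sphere 0 1))
      ≤ ∫⁻ y in sphere (0:E2) 1, ENNReal.ofReal (Bf y) ∂(μH[1]) := by
        apply setLIntegral_mono hmeasB
        intro y hy
        exact ENNReal.ofReal_le_ofReal (Nker_bound ht hx (mem_sphere_zero_iff_norm.mp hy))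
    _ ≤ ∫⁻ y, ENNReal.ofReal (Bf y) ∂(((volume : Measure ℝ).restrict (Ico 0 (2*π))).map cmap) :=
        lintegral_mono' measure_le le_rfl
    _ = ∫⁻ θ, ENNReal.ofReal (Bf (cmap θ)) ∂((volume : Measure ℝ).restrict (Ico 0 (2*π))) :=
        lintegral_map hmeasB cmap_continuous.measurable
    _ = ENNReal.ofReal (∫ θ in Ico 0 (2*π), Bf (cmap θ)) :=
        (ofReal_integral_eq_lintegral_ofReal hCint
          (Filter.Eventually.of_forall fun θ => by positivity)).symm
    _ ≤ ENNReal.ofReal ((Real.sqrt (2*π^3)/(4*π)) * t ^ (-(1:ℝ)/2)) :=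
        ENNReal.ofReal_le_ofReal (oneD ht x hx)
end
end

section
/- Let ν > 0 and let ω : (0,∞) × ℝ² → ℝ be such that ω and its first t-derivative and first and second x-derivatives are continuous on (0,∞) × D̄, ω satisfies the heat equation ∂_t ω = ν·Δω on (0,∞) × D, and ω is circularly symmetric: ω(t,x) = ϖ(t,‖x‖) for some function ϖ. Set α(t) := ∫_D ω(t,x) dx. Then α is differentiable on (0,∞) and for every t > 0 and every x with ‖x‖ = 1, the outward normal derivative satisfies x·∇ω(t,x) = α'(t)/(2πν). -/
open Metric Set MeasureTheory Filter Real
open scoped RealInnerProductSpace MeasureTheory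

noncomputable section

/-- For a circularly symmetric solution `ω` of the heat equation `∂_t ω = ν Δω` on the
unit disk, with `ω`, `∂_t ω`, and the first and second space derivatives continuous on
`(0,∞) × D̄`, the quantity `α(t) = ∫_D ω(t,x) dx` is differentiable in `t > 0` and the
outward normal derivative on the boundary satisfies `x ⬝ ∇ω(t,x) = α'(t)/(2πν)` for
`‖x‖ = 1`; equivalently `α` has derivative `2πν (x ⬝ ∇ω(t,x))` at `t`. -/
theorem stmt17 (ν : ℝ) (hν : 0 < ν)
    (ω : ℝ → E2 → ℝ) (ϖ : ℝ → ℝ → ℝ)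
    (ωt : ℝ → E2 → ℝ) (Dω : ℝ → E2 → (E2 →L[ℝ] ℝ))
    (D2ω : ℝ → E2 → (E2 →L[ℝ] E2 →L[ℝ] ℝ))
    (hcont : ContinuousOn (fun p : ℝ × E2 => ω p.1 p.2) (Ioi 0 ×ˢ closedBall 0 1))
    (hωt : ∀ t ∈ Ioi (0:ℝ), ∀ x ∈ closedBall (0:E2) 1,
      HasDerivAt (fun τ => ω τ x) (ωt t x) t)
    (hωtc : ContinuousOn (fun p : ℝ × E2 => ωt p.1 p.2) (Ioi 0 ×ˢ closedBall 0 1))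
    (hDω : ∀ t ∈ Ioi (0:ℝ), ∀ x ∈ closedBall (0:E2) 1,
      HasFDerivWithinAt (ω t) (Dω t x) (closedBall 0 1) x)
    (hDωc : ContinuousOn (fun p : ℝ × E2 => Dω p.1 p.2) (Ioi 0 ×ˢ closedBall 0 1))
    (hD2ω : ∀ t ∈ Ioi (0:ℝ), ∀ x ∈ closedBall (0:E2) 1,
      HasFDerivWithinAt (Dω t) (D2ω t x) (closedBall 0 1) x)
    (hD2ωc : ContinuousOn (fun p : ℝ × E2 => D2ω p.1 p.2) (Ioi 0 ×ˢ closedBall 0 1))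
    (hheat : ∀ t ∈ Ioi (0:ℝ), ∀ x ∈ ball (0:E2) 1,
      ωt t x = ν * (D2ω t x (EuclideanSpace.single 0 1) (EuclideanSpace.single 0 1)
        + D2ω t x (EuclideanSpace.single 1 1) (EuclideanSpace.single 1 1)))
    (hsym : ∀ t ∈ Ioi (0:ℝ), ∀ x ∈ closedBall (0:E2) 1, ω t x = ϖ t ‖x‖) :
    ∀ t ∈ Ioi (0:ℝ), ∀ x : E2, ‖x‖ = 1 →
      HasDerivAt (fun τ => ∫ y in ball (0:E2) 1, ω τ y) (2 * π * ν * Dω t x x) t := by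
  intro t ht x hx
  set e₀ : E2 := EuclideanSpace.single 0 1 with he₀
  set e₁ : E2 := EuclideanSpace.single 1 1 with he₁
  have hnorm : ∀ a b : ℝ, ‖a • e₀ + b • e₁‖ = Real.sqrt (a^2 + b^2) := by
    intro a b
    rw [he₀, he₁, EuclideanSpace.norm_eq]
    congr 1
    simp [Fin.sum_univ_two, EuclideanSpace.single_apply, sq_abs]
  have hne₀ : ‖e₀‖ = 1 := by
    have := hnorm 1 0
    simpa using this
  have hsmul_norm : ∀ (r : ℝ) (y : E2), 0 ≤ r → ‖y‖ = 1 → ‖r • y‖ = r := by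
    intro r y hr hy
    rw [norm_smul, hy, mul_one, Real.norm_eq_abs, abs_of_nonneg hr]
  have hmem : ∀ (r : ℝ) (y : E2), 0 ≤ r → r ≤ 1 → ‖y‖ = 1 → r • y ∈ closedBall (0:E2) 1 := by
    intro r y h0 h1 hy
    rw [mem_closedBall, dist_zero_right, hsmul_norm r y h0 hy]; exact h1
  have hmem₀ : ∀ r : ℝ, 0 ≤ r → r ≤ 1 → r • e₀ ∈ closedBall (0:E2) 1 := fun r h0 h1 =>
    hmem r e₀ h0 h1 hne₀
  -- symmetry reformulated with e₀
  have hsym' : ∀ τ ∈ Ioi (0:ℝ), ∀ y ∈ closedBall (0:E2) 1, ω τ y = ω τ (‖y‖ • e₀) := by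
    intro τ hτ y hy
    have h1 : ‖y‖ ≤ 1 := by simpa [mem_closedBall, dist_zero_right] using hy
    rw [hsym τ hτ y hy, hsym τ hτ (‖y‖ • e₀) (hmem₀ _ (norm_nonneg y) h1),
      hsmul_norm _ _ (norm_nonneg y) hne₀]
  -- Step 1 : polar coordinates
  have hαβ : ∀ τ ∈ Ioi (0:ℝ), ∫ y in ball (0:E2) 1, ω τ y
      = (2*π) * ∫ r in Ioo (0:ℝ) 1, r * ω τ (r • e₀) := by
    intro τ hτ
    have hvol : (volume (ball (0:E2) 1)).toReal = π := by
      rw [EuclideanSpace.volume_ball]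
      norm_num [Real.Gamma_two, Real.sq_sqrt Real.pi_nonneg, Real.pi_nonneg]
    have key : ∫ y in ball (0:E2) 1, ω τ y
        = ∫ y : E2, (Iio (1:ℝ)).indicator (fun s => ω τ (s • e₀)) ‖y‖ := by
      rw [← integral_indicator measurableSet_ball]
      congr 1; funext y
      by_cases hy : y ∈ ball (0:E2) 1
      · have h1 : ‖y‖ < 1 := by simpa [mem_ball, dist_zero_right] using hy
        rw [indicator_of_mem hy, indicator_of_mem (by exact h1),
          hsym' τ hτ y (ball_subset_closedBall hy)]
      · have h1 : ¬ ‖y‖ < 1 := by simpa [mem_ball, dist_zero_right] using hy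
        rw [indicator_of_notMem hy, indicator_of_notMem (by exact h1)]
    rw [key, MeasureTheory.integral_fun_norm_addHaar (volume : Measure E2)
      ((Iio (1:ℝ)).indicator (fun s => ω τ (s • e₀)))]
    have heq2 : ∫ y in Ioi (0:ℝ), y ^ (Module.finrank ℝ E2 - 1)
        • (Iio (1:ℝ)).indicator (fun s => ω τ (s • e₀)) y
        = ∫ r in Ioo (0:ℝ) 1, r * ω τ (r • e₀) := by
      have h1 : (fun y : ℝ => y ^ (Module.finrank ℝ E2 - 1)
          • (Iio (1:ℝ)).indicator (fun s => ω τ (s • e₀)) y)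
          = (Iio (1:ℝ)).indicator (fun y => y * ω τ (y • e₀)) := by
        funext y
        by_cases hy : y ∈ Iio (1:ℝ) <;>
          simp [hy, finrank_euclideanSpace, indicator_of_mem, indicator_of_notMem]
      rw [h1, integral_indicator measurableSet_Iio, Measure.restrict_restrict measurableSet_Iio]
      congr 1
      rw [Set.inter_comm, Ioi_inter_Iio]
    rw [heq2, measureReal_def, hvol, finrank_euclideanSpace]
    simp; ring
  -- continuity helpers
  have hψc : ContinuousOn (fun r : ℝ => Dω t (r • e₀)) (Icc 0 1) := by
    have hc : Continuous (fun r : ℝ => ((t, r • e₀) : ℝ × E2)) := by fun_prop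
    apply hDωc.comp hc.continuousOn
    intro r hr
    exact ⟨ht, hmem₀ r hr.1 hr.2⟩
  have hωtc1 : ContinuousOn (fun r : ℝ => ωt t (r • e₀)) (Icc 0 1) := by
    have hc : Continuous (fun r : ℝ => ((t, r • e₀) : ℝ × E2)) := by fun_prop
    apply hωtc.comp hc.continuousOn
    intro r hr
    exact ⟨ht, hmem₀ r hr.1 hr.2⟩
  -- Step 3-4 : radial ODE for s ↦ s * ψ s
  have hODE : ∀ r ∈ Ioo (0:ℝ) 1,
      HasDerivAt (fun s : ℝ => s * Dω t (s • e₀) e₀) (r * ωt t (r • e₀) / ν) r := by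
    intro r hr
    have hr0 : 0 < r := hr.1
    have hr1 : r < 1 := hr.2
    have hxe : r • e₀ = (r * 1) • e₀ + (r * 0) • e₁ := by simp
    have hxnorm : ‖r • e₀‖ = r := hsmul_norm r e₀ hr0.le hne₀
    have hxball : r • e₀ ∈ ball (0:E2) 1 := by
      rw [mem_ball, dist_zero_right, hxnorm]; exact hr1
    have hnhds : closedBall (0:E2) 1 ∈ nhds (r • e₀) :=
      Filter.mem_of_superset (isOpen_ball.mem_nhds hxball) ball_subset_closedBall
    have hfd2 : HasFDerivAt (Dω t) (D2ω t (r • e₀)) (r • e₀) :=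
      (hD2ω t ht (r • e₀) (ball_subset_closedBall hxball)).hasFDerivAt hnhds
    set c : ℝ → E2 := fun θ => (r * Real.cos θ) • e₀ + (r * Real.sin θ) • e₁ with hcdef
    have hcnorm : ∀ θ, ‖c θ‖ = r := by
      intro θ
      rw [hcdef]
      simp only
      rw [hnorm, show (r * Real.cos θ)^2 + (r * Real.sin θ)^2
          = r^2 * ((Real.sin θ)^2 + (Real.cos θ)^2) by ring, Real.sin_sq_add_cos_sq,
        mul_one, Real.sqrt_sq hr0.le]
    have hcball : ∀ θ, c θ ∈ ball (0:E2) 1 := by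
      intro θ; rw [mem_ball, dist_zero_right, hcnorm]; exact hr1
    have hc0 : c 0 = r • e₀ := by rw [hcdef]; simp
    have hcderiv : ∀ θ, HasDerivAt c ((r * -Real.sin θ) • e₀ + (r * Real.cos θ) • e₁) θ := by
      intro θ
      exact (((Real.hasDerivAt_cos θ).const_mul r).smul_const e₀).add
        (((Real.hasDerivAt_sin θ).const_mul r).smul_const e₁)
    have hk0 : ∀ θ, Dω t (c θ) ((r * -Real.sin θ) • e₀ + (r * Real.cos θ) • e₁) = 0 := by
      intro θ
      have hfd1' : HasFDerivAt (ω t) (Dω t (c θ)) (c θ) :=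
        (hDω t ht (c θ) (ball_subset_closedBall (hcball θ))).hasFDerivAt
          (Filter.mem_of_superset (isOpen_ball.mem_nhds (hcball θ)) ball_subset_closedBall)
      have h1 : HasDerivAt (fun θ' => ω t (c θ'))
          (Dω t (c θ) ((r * -Real.sin θ) • e₀ + (r * Real.cos θ) • e₁)) θ :=
        hfd1'.comp_hasDerivAt θ (hcderiv θ)
      have h2 : (fun θ' => ω t (c θ')) = fun _ => ϖ t r := by
        funext θ'
        rw [hsym t ht (c θ') (ball_subset_closedBall (hcball θ')), hcnorm]
      rw [h2] at h1
      exact h1.unique (hasDerivAt_const θ _)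
    have hfd2' : HasFDerivAt (Dω t) (D2ω t (r • e₀)) (c 0) := by rw [hc0]; exact hfd2
    have hA : HasDerivAt (fun θ => Dω t (c θ))
        (D2ω t (r • e₀) ((r * -Real.sin 0) • e₀ + (r * Real.cos 0) • e₁)) 0 :=
      hfd2'.comp_hasDerivAt 0 (hcderiv 0)
    have hv : HasDerivAt (fun θ => (r * -Real.sin θ) • e₀ + (r * Real.cos θ) • e₁)
        ((r * -Real.cos 0) • e₀ + (r * -Real.sin 0) • e₁) 0 := by
      refine HasDerivAt.add ?_ ?_
      · exact (((Real.hasDerivAt_sin 0).neg.const_mul r)).smul_const e₀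
      · exact (((Real.hasDerivAt_cos 0).const_mul r)).smul_const e₁
    have hk' := hA.clm_apply hv
    have hkconst : (fun θ => Dω t (c θ) ((r * -Real.sin θ) • e₀ + (r * Real.cos θ) • e₁))
        = fun _ => (0:ℝ) := funext hk0
    rw [hkconst] at hk'
    have hzero := (hasDerivAt_const (0:ℝ) (0:ℝ)).unique hk'
    have htang : r * D2ω t (r • e₀) e₁ e₁ = Dω t (r • e₀) e₀ := by
      simp only [Real.sin_zero, Real.cos_zero, mul_zero, mul_one, neg_zero, zero_smul,
        zero_add, add_zero, hc0, _root_.map_smul, map_neg, smul_eq_mul,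
        ContinuousLinearMap.smul_apply, ContinuousLinearMap.neg_apply,
        ContinuousLinearMap.map_smul_of_tower] at hzero
      have h3 : r * (r * D2ω t (r • e₀) e₁ e₁) = r * Dω t (r • e₀) e₀ := by linarith
      exact mul_left_cancel₀ hr0.ne' h3
    have hψ' : HasDerivAt (fun s : ℝ => Dω t (s • e₀) e₀) (D2ω t (r • e₀) e₀ e₀) r := by
      have hc : HasDerivAt (fun s : ℝ => s • e₀) e₀ r := by
        simpa using (hasDerivAt_id r).smul_const e₀
      have := (hfd2.comp_hasDerivAt r hc :
        HasDerivAt (fun s : ℝ => Dω t (s • e₀)) (D2ω t (r • e₀) e₀) r).clm_apply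
        (hasDerivAt_const r e₀)
      simpa using this
    have hprod := (hasDerivAt_id r).mul hψ'
    have hval : 1 * Dω t (r • e₀) e₀ + id r * D2ω t (r • e₀) e₀ e₀
        = r * ωt t (r • e₀) / ν := by
      rw [hheat t ht (r • e₀) hxball]
      simp only [id]
      field_simp
      rw [← htang]
      ring
    rw [hval] at hprod
    exact hprod
  -- Step 5 : FTC
  have hFTC : ∫ r in Ioo (0:ℝ) 1, r * ωt t (r • e₀) = ν * Dω t ((1:ℝ) • e₀) e₀ := by
    have hgc : ContinuousOn (fun s : ℝ => s * Dω t (s • e₀) e₀) (Icc 0 1) :=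
      continuousOn_id.mul (hψc.clm_apply continuousOn_const)
    have hg'c : ContinuousOn (fun s : ℝ => s * ωt t (s • e₀) / ν) (Icc 0 1) :=
      (continuousOn_id.mul hωtc1).div_const ν
    have hint : IntervalIntegrable (fun s : ℝ => s * ωt t (s • e₀) / ν) volume 0 1 :=
      (hg'c.mono (by rw [uIcc_of_le zero_le_one])).intervalIntegrable
    have hftc := intervalIntegral.integral_eq_sub_of_hasDeriv_right_of_le zero_le_one hgc
      (fun s hs => (hODE s hs).hasDerivWithinAt) hint
    simp only [one_mul, zero_mul] at hftc
    rw [intervalIntegral.integral_of_le zero_le_one,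
      MeasureTheory.integral_Ioc_eq_integral_Ioo, integral_div] at hftc
    field_simp at hftc
    rw [hftc, one_smul]; ring
  -- Step 2 : differentiation under the integral sign
  have hderiv : HasDerivAt (fun τ => ∫ r in Ioo (0:ℝ) 1, r * ω τ (r • e₀))
      (∫ r in Ioo (0:ℝ) 1, r * ωt t (r • e₀)) t := by
    have ht' : (0:ℝ) < t := ht
    have hslice : ∀ f : ℝ → E2 → ℝ, ContinuousOn (fun p : ℝ × E2 => f p.1 p.2)
        (Ioi 0 ×ˢ closedBall 0 1) → ∀ τ ∈ Ioi (0:ℝ),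
        ContinuousOn (fun r : ℝ => r * f τ (r • e₀)) (Icc 0 1) := by
      intro f hf τ hτ
      have hc : Continuous (fun r : ℝ => ((τ, r • e₀) : ℝ × E2)) := by fun_prop
      refine continuousOn_id.mul (hf.comp hc.continuousOn ?_)
      intro r hr
      exact ⟨hτ, hmem₀ r hr.1 hr.2⟩
    obtain ⟨C, hC⟩ : ∃ C, ∀ p ∈ Icc (t/2) (3*t/2) ×ˢ closedBall (0:E2) 1,
        ‖ωt p.1 p.2‖ ≤ C := by
      apply ((isCompact_Icc).prod (isCompact_closedBall _ _)).exists_bound_of_continuousOn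
      exact hωtc.mono (prod_mono_left (fun s hs => lt_of_lt_of_le (by linarith) hs.1))
    have hball_sub : ball t (t/2) ⊆ Icc (t/2) (3*t/2) := by
      intro s hs
      rw [mem_ball, Real.dist_eq, abs_lt] at hs
      constructor <;> linarith [hs.1, hs.2]
    have hmeas : ∀ᶠ τ in nhds t, AEStronglyMeasurable
        (fun r : ℝ => r * ω τ (r • e₀)) (volume.restrict (Ioo (0:ℝ) 1)) := by
      filter_upwards [Ioi_mem_nhds ht'] with τ hτ
      exact ((hslice ω hcont τ hτ).mono Ioo_subset_Icc_self).aestronglyMeasurable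
        measurableSet_Ioo
    have hint : IntegrableOn (fun r : ℝ => r * ω t (r • e₀)) (Ioo (0:ℝ) 1) :=
      ((hslice ω hcont t ht).integrableOn_Icc).mono_set Ioo_subset_Icc_self
    have h := hasDerivAt_integral_of_dominated_loc_of_deriv_le (s := ball t (t/2)) (ball_mem_nhds t (by positivity))
      hmeas hint
      (F' := fun τ r => r * ωt τ (r • e₀))
      (((hslice ωt hωtc t ht).mono Ioo_subset_Icc_self).aestronglyMeasurable
        measurableSet_Ioo)
      (bound := fun _ => C)
      ?_ (integrableOn_const (by simp)) ?_
    · exact h.2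
    · rw [ae_restrict_iff' measurableSet_Ioo]
      refine ae_of_all _ fun r hr τ hτ => ?_
      have h1 : ‖(r : ℝ)‖ ≤ 1 := by
        rw [Real.norm_eq_abs, abs_of_nonneg hr.1.le]; exact hr.2.le
      calc ‖r * ωt τ (r • e₀)‖ = ‖r‖ * ‖ωt τ (r • e₀)‖ := norm_mul _ _
        _ ≤ 1 * C := by
            apply mul_le_mul h1 (hC (τ, r • e₀) ⟨hball_sub hτ, hmem₀ r hr.1.le hr.2.le⟩)
              (norm_nonneg _) zero_le_one
        _ = C := one_mul C
    · rw [ae_restrict_iff' measurableSet_Ioo]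
      refine ae_of_all _ fun r hr τ hτ => ?_
      have hτ' : τ ∈ Ioi (0:ℝ) := lt_of_lt_of_le (by positivity) (hball_sub hτ).1
      exact (hωt τ hτ' (r • e₀) (hmem₀ r hr.1.le hr.2.le)).const_mul r
  -- Step 6 : boundary rotation invariance
  have hrot : Dω t x x = Dω t ((1:ℝ) • e₀) e₀ := by
    have key : ∀ y : E2, ‖y‖ = 1 →
        HasDerivWithinAt (ϖ t) (Dω t ((1:ℝ) • y) y) (Icc (0:ℝ) 1) 1 := by
      intro y hy
      have hmap : MapsTo (fun s : ℝ => s • y) (Icc (0:ℝ) 1) (closedBall (0:E2) 1) :=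
        fun s hs => hmem s y hs.1 hs.2 hy
      have hder : HasDerivWithinAt (fun s : ℝ => s • y) y (Icc (0:ℝ) 1) 1 := by
        simpa using ((hasDerivAt_id (1:ℝ)).smul_const y).hasDerivWithinAt
      have hcomp : HasDerivWithinAt (fun s : ℝ => ω t (s • y)) (Dω t ((1:ℝ) • y) y)
          (Icc (0:ℝ) 1) 1 :=
        (hDω t ht ((1:ℝ) • y) (hmem 1 y zero_le_one le_rfl hy)).comp_hasDerivWithinAt 1
          hder hmap
      refine hcomp.congr (fun s hs => ?_) ?_
      · rw [hsym t ht (s • y) (hmem s y hs.1 hs.2 hy), hsmul_norm s y hs.1 hy]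
      · rw [hsym t ht ((1:ℝ) • y) (hmem 1 y zero_le_one le_rfl hy),
          hsmul_norm 1 y zero_le_one hy]
    have huniq : UniqueDiffWithinAt ℝ (Icc (0:ℝ) 1) 1 :=
      (uniqueDiffOn_Icc zero_lt_one) 1 (right_mem_Icc.2 zero_le_one)
    have h := huniq.eq_deriv _ (key x hx) (key e₀ hne₀)
    rwa [one_smul] at h
  -- Step 7 : assemble
  have heq : (fun τ => ∫ y in ball (0:E2) 1, ω τ y)
      =ᶠ[nhds t] fun τ => (2*π) * ∫ r in Ioo (0:ℝ) 1, r * ω τ (r • e₀) := by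
    filter_upwards [Ioi_mem_nhds ht] with τ hτ using hαβ τ hτ
  have : HasDerivAt (fun τ => (2*π) * ∫ r in Ioo (0:ℝ) 1, r * ω τ (r • e₀))
      (2 * π * ν * Dω t x x) t := by
    have := hderiv.const_mul (2*π)
    rw [hFTC, ← hrot] at this
    rw [show 2 * π * ν * Dω t x x = 2 * π * (ν * Dω t x x) by ring]; exact this
  exact this.congr_of_eventuallyEq heq
end
end
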